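/- The derivative of Ψ, where Ψ(x)=0 for x ≤ 1/2 and Ψ(x)=exp(1-1/(2x-1)²) for x > 1/2, satisfies 0 ≤ Ψ'(x) ≤ √(54/e) for all x ∈ ℝ. -/

import Mathlib

open scoped BigOperators

/-- Ψ(x) = 0 for x ≤ 1/2 and exp(1 - 1/(2x-1)²) for x > 1/2. -/
noncomputable def Psi (x : ℝ) : ℝ :=
  if x ≤ 1/2 then 0 else Real.exp (1 - 1 / (2*x - 1)^2)

/-- Φ(y) = √e · ∫_{-∞}^y e^{-t²/2} dt. -/
noncomputable def Phi (y : ℝ) : ℝ :=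
  Real.sqrt (Real.exp 1) * ∫ t in Set.Iic y, Real.exp (-t^2/2)

/-- The Nesterov-style hard instance f̄_T (0-indexed coordinates). -/
noncomputable def fbar (T : ℕ) (x : Fin T → ℝ) : ℝ :=
  ∑ i : Fin T,
    if (i : ℕ) = 0 then -(Psi 1 * Phi (x i))
    else Psi (-(x ⟨i.1 - 1, lt_of_le_of_lt (Nat.sub_le _ _) i.isLt⟩)) * Phi (-(x i))
         - Psi (x ⟨i.1 - 1, lt_of_le_of_lt (Nat.sub_le _ _) i.isLt⟩) * Phi (x i)

/-- j-th partial derivative of f̄_T at x. -/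
noncomputable def fpartial (T : ℕ) (x : Fin T → ℝ) (j : Fin T) : ℝ :=
  deriv (fun s => fbar T (Function.update x j s)) (x j)

lemma psi_nonneg (x : ℝ) : 0 ≤ Psi x := by
  unfold Psi; split
  · exact le_refl 0
  · exact (Real.exp_pos _).le

lemma psi_le (x : ℝ) : Psi x ≤ Real.exp 1 * (2*x-1)^2 := by
  unfold Psi; split
  · positivity
  · rename_i h
    push_neg at h
    have hu : 0 < (2*x-1)^2 := by nlinarith
    have h1 : ((2*x-1)^2)⁻¹ ≤ Real.exp (1/(2*x-1)^2) := by
      have := Real.add_one_le_exp (1/(2*x-1)^2)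
      rw [← one_div]; linarith
    have h2 : Real.exp (-(1/(2*x-1)^2)) ≤ (2*x-1)^2 := by
      rw [Real.exp_neg]
      calc (Real.exp (1/(2*x-1)^2))⁻¹ ≤ (((2*x-1)^2)⁻¹)⁻¹ :=
            inv_anti₀ (by positivity) h1
        _ = (2*x-1)^2 := inv_inv _
    calc Real.exp (1 - 1/(2*x-1)^2)
        = Real.exp 1 * Real.exp (-(1/(2*x-1)^2)) := by
          rw [← Real.exp_add]; ring_nf
      _ ≤ Real.exp 1 * (2*x-1)^2 :=
          mul_le_mul_of_nonneg_left h2 (Real.exp_pos 1).le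

lemma hasDerivAt_psi (x : ℝ) (hx : 1/2 < x) :
    HasDerivAt Psi (Real.exp (1 - 1 / (2*x - 1)^2) * (0 - -(2 * (2*x-1)^1 * 2) / ((2*x-1)^2)^2)) x := by
  have h0 : 2*x - 1 ≠ 0 := by intro h; nlinarith
  have h1 : HasDerivAt (fun y : ℝ => 2*y - 1) 2 x := by
    simpa using ((hasDerivAt_id x).const_mul 2).sub_const 1
  have h2 : HasDerivAt (fun y : ℝ => (2*y-1)^2) (2 * (2*x-1)^1 * 2) x := h1.pow 2
  have h3 := h2.inv (pow_ne_zero 2 h0)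
  have h4 := ((hasDerivAt_const x (1:ℝ)).sub h3).exp
  rw [one_div]
  refine h4.congr_of_eventuallyEq ?_
  filter_upwards [Ioi_mem_nhds hx] with y hy
  have hny : ¬ y ≤ 1/2 := not_le.2 hy
  rw [Psi, if_neg hny, one_div]; rfl

lemma hasDerivAt_psi_half : HasDerivAt Psi 0 (1/2) := by
  rw [hasDerivAt_iff_isLittleO]
  have hP : Psi (1/2) = 0 := by rw [Psi, if_pos le_rfl]
  rw [Asymptotics.isLittleO_iff]
  intro c hc
  have hcb : 0 < c / (4 * Real.exp 1) := by positivity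
  filter_upwards [Metric.ball_mem_nhds (1/2 : ℝ) hcb] with y hy
  rw [Metric.mem_ball, Real.dist_eq] at hy
  rw [hP]
  simp only [smul_eq_mul, mul_zero, sub_zero, Real.norm_eq_abs]
  rw [abs_of_nonneg (psi_nonneg y)]
  have hb := psi_le y
  have hsq : (2*y-1)^2 = 4 * |y - 1/2|^2 := by rw [sq_abs]; ring
  have he := Real.exp_pos 1
  have habs : 0 ≤ |y - 1/2| := abs_nonneg _
  rw [lt_div_iff₀ (by positivity)] at hy
  nlinarith [mul_le_mul_of_nonneg_right hy.le habs]

lemma key (u : ℝ) (hu : 0 < u) :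
    Real.exp (1 - 1/u^2) * (0 - -(2 * u^1 * 2) / (u^2)^2) ≤ Real.sqrt (54 / Real.exp 1) := by
  have h4 : (0 - -(2 * u^1 * 2) / (u^2)^2) = 4/u^3 := by
    field_simp; ring
  rw [h4]
  set E := Real.exp (1 - 1/u^2) with hE
  have hEpos : 0 < E := Real.exp_pos _
  set A := Real.exp (2/u^2 - 3) with hA
  have hApos : 0 < A := Real.exp_pos _
  set s : ℝ := 2/(3*u^2) with hs
  have hspos : 0 < s := by positivity
  have h1 : s ≤ Real.exp (s - 1) := by
    have := Real.add_one_le_exp (s - 1); linarith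
  have h2 : s^3 ≤ A := by
    calc s^3 ≤ Real.exp (s-1)^3 := pow_le_pow_left₀ hspos.le h1 3
      _ = Real.exp (3*(s-1)) := by
          rw [← Real.exp_nat_mul]; norm_num
      _ = A := by rw [hA]; congr 1; rw [hs]; field_simp
  have hs3 : s^3 = 8/(27*u^6) := by rw [hs]; field_simp; ring
  have hA' : 8 ≤ 27 * u^6 * A := by
    rw [hs3] at h2
    rw [div_le_iff₀ (by positivity)] at h2
    linarith
  have hprod : E^2 * (A * Real.exp 1) = 1 := by
    rw [hE, hA, sq, ← Real.exp_add, ← Real.exp_add, ← Real.exp_add,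
      Real.exp_eq_one_iff]
    field_simp
    ring
  have hgoal : 16 * E^2 * Real.exp 1 ≤ 54 * u^6 := by
    nlinarith [hprod, hA', hApos, Real.exp_pos 1, sq_nonneg E]
  have hD : 0 ≤ E * (4/u^3) := by positivity
  calc E * (4/u^3)
      = Real.sqrt ((E * (4/u^3))^2) := (Real.sqrt_sq hD).symm
    _ ≤ Real.sqrt (54 / Real.exp 1) := by
        apply Real.sqrt_le_sqrt
        have hexpand : (E * (4/u^3))^2 = 16 * E^2 / u^6 := by
          field_simp; ring
        rw [hexpand, div_le_div_iff₀ (by positivity) (Real.exp_pos 1)]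
        linarith

/-- 0 ≤ Ψ'(x) ≤ √(54/e) for all real x. -/
theorem stmt_4 : ∀ x : ℝ, 0 ≤ deriv Psi x ∧ deriv Psi x ≤ Real.sqrt (54 / Real.exp 1) := by
  intro x
  rcases lt_trichotomy x (1/2) with hx | hx | hx
  · have he : Psi =ᶠ[nhds x] (fun _ => (0:ℝ)) := by
      filter_upwards [Iio_mem_nhds hx] with y hy
      rw [Psi, if_pos (le_of_lt hy)]
    have hd : deriv Psi x = 0 := by rw [he.deriv_eq, deriv_const]
    rw [hd]
    exact ⟨le_rfl, Real.sqrt_nonneg _⟩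
  · subst hx
    rw [hasDerivAt_psi_half.deriv]
    exact ⟨le_rfl, Real.sqrt_nonneg _⟩
  · rw [(hasDerivAt_psi x hx).deriv]
    have hu : 0 < 2*x - 1 := by linarith
    constructor
    · have : 0 - -(2 * (2*x-1)^1 * 2) / ((2*x-1)^2)^2 = 4*(2*x-1)/((2*x-1)^2)^2 := by ring
      rw [this]
      exact mul_nonneg (Real.exp_pos _).le (div_nonneg (by linarith) (by positivity))
    · exact key (2*x-1) hu
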